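/- arXiv:1701.07092 — 3 statements merged into one kernel-verified Lean document; each statement's English description precedes it below -/
import Mathlib

section
/- Let $a,b,c$ be positive integers. Then $\det\left(\binom{b+c}{c+j-i}\right)_{1\le i,j\le a} = \prod_{i=1}^{a}\prod_{j=1}^{b}\prod_{k=1}^{c}\frac{i+j+k-1}{i+j+k-2}$, where the binomial coefficients are taken with the convention that $\binom{n}{k} = 0$ unless $0 \le k \le n$. -/
/-- The binomial coefficient for integer arguments, over ℚ:
`n!/((n-k)! k!)` if `0 ≤ k ≤ n`, and `0` otherwise. -/
noncomputable def ibinom (n k : ℤ) : ℚ :=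
  if 0 ≤ k ∧ k ≤ n then
    (Nat.factorial n.toNat : ℚ) / (Nat.factorial (n - k).toNat * Nat.factorial k.toNat)
  else 0

/-- The entry `A(b,c,i,j)` of the lower-triangular factor. -/
noncomputable def Afun (b c i j : ℕ) : ℚ :=
  if j ≤ i ∧ i ≤ c + j then
    (Nat.factorial c * Nat.factorial (i - 1) * Nat.factorial (b + j - 1) : ℚ) /
      (Nat.factorial (j - 1) * Nat.factorial (b + i - 1) * Nat.factorial (i - j) *
        Nat.factorial (c + j - i))
  else 0

/-- The entry `C(b,c,i,j)` of the upper-triangular factor. -/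
noncomputable def Cfun (b c i j : ℕ) : ℚ :=
  if i ≤ j ∧ j ≤ b + i then
    (Nat.factorial b * Nat.factorial (j - 1) * Nat.factorial (b + c + i - 1) : ℚ) /
      (Nat.factorial (b + i - 1) * Nat.factorial (c + j - 1) * Nat.factorial (j - i) *
        Nat.factorial (b + i - j))
  else 0

/-- The entry `D(i)` (last column of the upper-triangular factor), in the
integer parameters `n, m`. -/
noncomputable def Dfun (b c : ℕ) (n m : ℤ) (i : ℕ) : ℚ :=
  ∑ v ∈ Finset.Icc 1 i, (-1 : ℚ) ^ (i - v) *
    ((Nat.factorial (i - 1) * Nat.factorial (b + v - 1) * Nat.factorial (c + i - v - 1) : ℚ) /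
      (Nat.factorial (c - 1) * Nat.factorial (v - 1) * Nat.factorial (b + i - 1) *
        Nat.factorial (i - v))) * ibinom n (m - v)

/-- The entry `B(j)` (last row of the lower-triangular factor), in the
integer parameters `n', m'`. -/
noncomputable def Bfun (b c : ℕ) (n' m' : ℤ) (j : ℕ) : ℚ :=
  ∑ v ∈ Finset.Icc 1 j, (-1 : ℚ) ^ (j - v) *
    ((Nat.factorial (b + j - 1) * Nat.factorial (c + v - 1) * Nat.factorial (b + j - v - 1) : ℚ) /
      (Nat.factorial (b - 1) * Nat.factorial (v - 1) * Nat.factorial (j - v) *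
        Nat.factorial (b + c + j - 1))) * ibinom n' (v - m')

/-- MacMahon's product formula for the number of rhombus tilings of the
semi-regular hexagon with side lengths `a, b, c`. -/
noncomputable def macmahon (a b c : ℕ) : ℚ :=
  ∏ i ∈ Finset.Icc 1 a, ∏ j ∈ Finset.Icc 1 b, ∏ k ∈ Finset.Icc 1 c,
    (((i : ℚ) + j + k - 1) / ((i : ℚ) + j + k - 2))


section Aux

open Finset Nat Polynomial Matrix

/-- helper factorial product lemmas -/
lemma fact_add_prod (x n : ℕ) : (x + n)! = x ! * ∏ m ∈ range n, (x + m + 1) := by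
  induction n with
  | zero => simp
  | succ n ih =>
      rw [prod_range_succ, ← mul_assoc, ← ih, ← Nat.add_assoc, Nat.factorial_succ, mul_comm]

lemma fact_sub_prod (m i : ℕ) (h : i ≤ m) : m ! = (m - i)! * ∏ t ∈ range i, (m - t) := by
  induction i with
  | zero => simp
  | succ i ih =>
      have h' : i ≤ m := by omega
      have h2 : (m - i)! = (m - (i+1))! * (m - i) := by
        have h3 : m - i = (m - (i+1)) + 1 := by omega
        rw [h3, Nat.factorial_succ, mul_comm]
      rw [prod_range_succ, ih h', h2]
      ring

lemma prod_cast_add (x m : ℕ) : ∏ w ∈ range m, ((x:ℚ) + w + 1) = ((x + m)! : ℚ) / (x ! : ℚ) := by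
  rw [eq_div_iff (by exact_mod_cast (Nat.factorial_ne_zero x)), mul_comm]
  exact_mod_cast (congrArg (Nat.cast : ℕ → ℚ) (fact_add_prod x m)).symm

lemma prod_cast_sub (m i : ℕ) (h : i ≤ m) :
    ∏ t ∈ range i, ((m:ℚ) - t) = (m ! : ℚ) / ((m - i)! : ℚ) := by
  rw [eq_div_iff (by exact_mod_cast (Nat.factorial_ne_zero (m - i))), mul_comm]
  have := congrArg (Nat.cast : ℕ → ℚ) (fact_sub_prod m i h)
  push_cast at this
  rw [this]
  congr 1
  refine Finset.prod_congr rfl fun t ht => ?_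
  rw [Nat.cast_sub (by simp at ht; omega)]

lemma L1 (n : ℕ) (f : ℕ → ℚ) :
    ∏ i ∈ range n, ∏ m ∈ range i, f m = ∏ m ∈ range n, f m ^ (n - 1 - m) := by
  induction n with
  | zero => simp
  | succ n ih =>
      rw [prod_range_succ, ih]
      rw [prod_range_succ (fun m => f m ^ (n + 1 - 1 - m))]
      simp only [Nat.add_sub_cancel, Nat.sub_self, pow_zero, mul_one]
      rw [← prod_mul_distrib]
      refine prod_congr rfl fun m hm => ?_
      rw [mem_range] at hm
      rw [← pow_succ]
      congr 1
      omega

lemma tele (n : ℕ) (y : ℚ) (hy : 0 < y) :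
    ∏ k ∈ range n, (y + k + 1) / (y + k) = (y + n) / y := by
  induction n with
  | zero => simp [div_self hy.ne']
  | succ n ih =>
      rw [prod_range_succ, ih]
      have h1 : y + n ≠ 0 := by positivity
      have h2 : y ≠ 0 := ne_of_gt hy
      field_simp
      push_cast
      ring

noncomputable def sweepM (a b c k : ℕ) : Matrix (Fin a) (Fin a) ℚ :=
  Matrix.of fun i j => (∏ t ∈ Finset.range i.1, ((j.1 : ℚ) + c - t)) *
    (∏ u ∈ Finset.Ico (i.1 + 1 + k) a, ((b : ℚ) + u - j.1))

noncomputable def Emat (a k : ℕ) : Matrix (Fin a) (Fin a) ℚ :=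
  Matrix.of fun i j => (if i = j then 1 else 0) +
    (if (j : ℕ) = (i : ℕ) + 1 ∧ (i : ℕ) + k + 2 ≤ a then 1 else 0)

noncomputable def gfun (a b c : ℕ) (j : Fin a) : ℚ :=
  ((b + c)! : ℚ) / (((c + (j : ℕ))! : ℚ) * ((b + (a - 1 - (j : ℕ)))! : ℚ))

lemma Emat_det (a k : ℕ) : (Emat a k).det = 1 := by
  rw [Matrix.det_of_upperTriangular]
  · refine Finset.prod_eq_one fun i _ => ?_
    simp [Emat]
  · intro i j hij
    have hji : (j : ℕ) < (i : ℕ) := hij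
    simp only [Emat, Matrix.of_apply]
    rw [if_neg (fun hh : i = j => by rw [hh] at hji; omega), if_neg (by omega)]
    norm_num

lemma sweep_key (a b c k : ℕ) (i j : Fin a) :
    sweepM a b c k i j + (if h : (i : ℕ) + k + 2 ≤ a then
        sweepM a b c k ⟨(i : ℕ) + 1, by omega⟩ j else 0)
    = (if (i : ℕ) + k + 2 ≤ a then ((b : ℚ) + c + k + 1) else 1) * sweepM a b c (k + 1) i j := by
  by_cases h : (i : ℕ) + k + 2 ≤ a
  · rw [dif_pos h, if_pos h]
    simp only [sweepM, Matrix.of_apply]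
    have h1 : (i : ℕ) + 1 + k < a := by omega
    rw [Finset.prod_eq_prod_Ico_succ_bot h1, prod_range_succ]
    have e1 : (i : ℕ) + 1 + k + 1 = (i : ℕ) + 1 + (k + 1) := by omega
    have e2 : (i : ℕ) + 1 + 1 + k = (i : ℕ) + 1 + (k + 1) := by omega
    rw [e1, e2]
    push_cast
    ring
  · rw [dif_neg h, if_neg h, add_zero, one_mul]
    simp only [sweepM, Matrix.of_apply]
    rw [Finset.Ico_eq_empty (by omega), Finset.Ico_eq_empty (by omega)]

lemma Emat_mul (a b c k : ℕ) :
    Emat a k * sweepM a b c k = Matrix.of fun i j : Fin a =>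
      (if (i : ℕ) + k + 2 ≤ a then ((b : ℚ) + c + k + 1) else 1) * sweepM a b c (k + 1) i j := by
  ext i j
  rw [Matrix.mul_apply, Matrix.of_apply]
  simp only [Emat, Matrix.of_apply, add_mul, Finset.sum_add_distrib]
  rw [← sweep_key a b c k i j]
  congr 1
  · simp only [ite_mul, one_mul, zero_mul]
    rw [Finset.sum_ite_eq Finset.univ i (fun l => sweepM a b c k l j)]
    simp
  · by_cases h : (i : ℕ) + k + 2 ≤ a
    · rw [dif_pos h]
      have : ∀ l : Fin a, ((l : ℕ) = (i : ℕ) + 1 ∧ (i : ℕ) + k + 2 ≤ a) ↔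
          l = (⟨(i : ℕ) + 1, by omega⟩ : Fin a) := by
        intro l
        constructor
        · rintro ⟨h1, -⟩; exact Fin.ext h1
        · rintro rfl; exact ⟨rfl, h⟩
      simp only [this, ite_mul, one_mul, zero_mul]
      rw [Finset.sum_ite_eq' Finset.univ _ (fun l => sweepM a b c k l j)]
      simp
    · rw [dif_neg h]
      refine Finset.sum_eq_zero fun l _ => ?_
      rw [if_neg (by tauto), zero_mul]

lemma card_filter_aux (a k : ℕ) :
    (Finset.univ.filter fun i : Fin a => (i : ℕ) + k + 2 ≤ a).card = a - 1 - k := by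
  rw [← Finset.card_range (a - 1 - k)]
  refine Finset.card_bij (fun i _ => (i : ℕ)) ?_ ?_ ?_
  · intro i hi
    simp only [Finset.mem_filter] at hi
    simp only [Finset.mem_range]
    omega
  · intro i hi i' hi' hh
    exact Fin.ext hh
  · intro t ht
    simp only [Finset.mem_range] at ht
    exact ⟨⟨t, by omega⟩, by simp only [Finset.mem_filter, Finset.mem_univ, true_and]; omega, rfl⟩

lemma sweep_step (a b c k : ℕ) :
    (sweepM a b c k).det = ((b : ℚ) + c + k + 1) ^ (a - 1 - k) * (sweepM a b c (k + 1)).det := by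
  have h1 : (sweepM a b c k).det = (Emat a k * sweepM a b c k).det := by
    rw [Matrix.det_mul, Emat_det, one_mul]
  rw [h1, Emat_mul, Matrix.det_mul_column]
  congr 1
  rw [Finset.prod_ite, Finset.prod_const, Finset.prod_const, one_pow, mul_one, card_filter_aux]

lemma sweep_final (n b c : ℕ) :
    (sweepM (n+1) b c (n+1)).det = (Nat.superFactorial n : ℚ) := by
  set Pm : Matrix (Fin (n+1)) (Fin (n+1)) ℚ := Matrix.of fun i j : Fin (n+1) =>
    Polynomial.eval ((i:ℕ):ℚ) (∏ t ∈ Finset.range (j:ℕ),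
      (Polynomial.X + Polynomial.C ((c:ℚ) - t))) with hPm
  have hmonic : ∀ j : Fin (n+1), Monic (∏ t ∈ Finset.range (j:ℕ),
      (Polynomial.X + Polynomial.C ((c:ℚ) - t))) :=
    fun j => monic_prod_of_monic _ _ fun t _ => monic_X_add_C _
  have hdeg : ∀ j : Fin (n+1), (∏ t ∈ Finset.range (j:ℕ),
      (Polynomial.X + Polynomial.C ((c:ℚ) - t))).natDegree = (j:ℕ) := by
    intro j
    rw [Polynomial.natDegree_prod_of_monic _ _ fun t _ => monic_X_add_C _]
    simp only [Polynomial.natDegree_X_add_C, Finset.sum_const, smul_eq_mul, mul_one,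
      Finset.card_range]
  have h1 : sweepM (n+1) b c (n+1) = Pmᵀ := by
    ext i j
    rw [Matrix.transpose_apply, hPm, Matrix.of_apply]
    simp only [sweepM, Matrix.of_apply, Polynomial.eval_prod, Polynomial.eval_add,
      Polynomial.eval_X, Polynomial.eval_C]
    rw [Finset.Ico_eq_empty (by omega), Finset.prod_empty, mul_one]
    exact Finset.prod_congr rfl fun t _ => by ring
  rw [h1, Matrix.det_transpose, hPm,
    ← Matrix.det_eval_matrixOfPolynomials_eq_det_vandermonde
      (fun i : Fin (n+1) => ((i:ℕ):ℚ)) _ hdeg hmonic]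
  exact_mod_cast Matrix.det_vandermonde_id_eq_superFactorial (R := ℚ) n

lemma entry_eq (a b c : ℕ) (hb : 0 < b) (i j : Fin a) :
    ibinom ((b : ℤ) + c) ((c : ℤ) + ((j : ℕ) + 1) - ((i : ℕ) + 1))
      = gfun a b c j * sweepM a b c 0 i j := by
  have hI : (i : ℕ) < a := i.2
  have hJ : (j : ℕ) < a := j.2
  by_cases h2 : (j : ℕ) ≤ b + (i : ℕ)
  · by_cases h1 : (i : ℕ) ≤ c + (j : ℕ)
    · -- main case
      rw [ibinom, if_pos (by constructor <;> [omega; push_cast <;> omega])]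
      have e1 : ((b : ℤ) + c).toNat = b + c := by omega
      have e2 : (((b : ℤ) + c) - ((c : ℤ) + ((j:ℕ) + 1) - ((i:ℕ) + 1))).toNat
          = b + (i:ℕ) - (j:ℕ) := by omega
      have e3 : ((c : ℤ) + ((j:ℕ) + 1) - ((i:ℕ) + 1)).toNat = c + (j:ℕ) - (i:ℕ) := by omega
      rw [e1, e2, e3]
      have hp1 : (∏ t ∈ Finset.range (i:ℕ), (((j:ℕ) : ℚ) + c - t))
          = ((c + (j:ℕ))! : ℚ) / ((c + (j:ℕ) - (i:ℕ))! : ℚ) := by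
        rw [← prod_cast_sub (c + (j:ℕ)) (i:ℕ) (by omega)]
        refine Finset.prod_congr rfl fun t ht => by push_cast; ring
      have hp2 : (∏ u ∈ Finset.Ico ((i:ℕ) + 1 + 0) a, ((b : ℚ) + u - (j:ℕ)))
          = ((b + (a - 1 - (j:ℕ)))! : ℚ) / ((b + (i:ℕ) - (j:ℕ))! : ℚ) := by
        rw [Finset.prod_Ico_eq_prod_range]
        have e4 : a - ((i:ℕ) + 1 + 0) = a - 1 - (i:ℕ) := by omega
        rw [e4]
        have e5 : b + (i:ℕ) - (j:ℕ) + (a - 1 - (i:ℕ)) = b + (a - 1 - (j:ℕ)) := by omega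
        rw [← e5, ← prod_cast_add]
        refine Finset.prod_congr rfl fun w hw => ?_
        rw [Nat.cast_sub (by omega)]
        push_cast
        ring
      simp only [sweepM, Matrix.of_apply]
      rw [hp1, hp2, gfun]
      have z1 : ((c + (j:ℕ))! : ℚ) ≠ 0 := by exact_mod_cast Nat.factorial_ne_zero _
      have z2 : ((b + (a - 1 - (j:ℕ)))! : ℚ) ≠ 0 := by exact_mod_cast Nat.factorial_ne_zero _
      have z3 : ((c + (j:ℕ) - (i:ℕ))! : ℚ) ≠ 0 := by exact_mod_cast Nat.factorial_ne_zero _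
      have z4 : ((b + (i:ℕ) - (j:ℕ))! : ℚ) ≠ 0 := by exact_mod_cast Nat.factorial_ne_zero _
      field_simp
      try ring
    · -- i > c + j : entry zero
      rw [ibinom, if_neg (by push_cast; omega)]
      have : sweepM a b c 0 i j = 0 := by
        simp only [sweepM, Matrix.of_apply]
        rw [Finset.prod_eq_zero (Finset.mem_range.2 (show c + (j:ℕ) < (i:ℕ) by omega))
          (by push_cast; ring), zero_mul]
      rw [this, mul_zero]
  · -- j > b + i : entry zero
    rw [ibinom, if_neg (by push_cast; omega)]
    have : sweepM a b c 0 i j = 0 := by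
      simp only [sweepM, Matrix.of_apply]
      rw [Finset.prod_eq_zero (show (j:ℕ) - b ∈ Finset.Ico ((i:ℕ) + 1 + 0) a by
          rw [Finset.mem_Ico]; omega)
        (by rw [Nat.cast_sub (by omega)]; push_cast; ring), mul_zero]
    rw [this, mul_zero]

lemma macmahon_closed (a b c : ℕ) :
    macmahon a b c
      = ∏ i ∈ range a, ((i ! : ℚ) * ((b + c + i)! : ℚ)) / (((b + i)! : ℚ) * ((c + i)! : ℚ)) := by
  have step1 : macmahon a b c
      = ∏ i ∈ range a, ∏ j ∈ range b, ((i:ℚ) + j + 1 + c) / ((i:ℚ) + j + 1) := by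
    rw [macmahon, ← Finset.Ico_add_one_right_eq_Icc, Finset.prod_Ico_eq_prod_range]
    refine Finset.prod_congr rfl fun i _ => ?_
    rw [← Finset.Ico_add_one_right_eq_Icc, Finset.prod_Ico_eq_prod_range]
    refine Finset.prod_congr rfl fun j _ => ?_
    have hy : (0:ℚ) < (i:ℚ) + j + 1 := by positivity
    rw [← tele c ((i:ℚ) + j + 1) hy, ← Finset.Ico_add_one_right_eq_Icc, Finset.prod_Ico_eq_prod_range]
    refine Finset.prod_congr rfl fun k _ => ?_
    rw [div_eq_div_iff (by push_cast; ring_nf; positivity) (by push_cast; ring_nf; positivity)]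
    push_cast
    ring
  rw [step1]
  refine Finset.prod_congr rfl fun i _ => ?_
  have e1 : ∏ j ∈ range b, ((i:ℚ) + j + 1 + c) = ∏ j ∈ range b, (((i+c:ℕ):ℚ) + j + 1) := by
    refine Finset.prod_congr rfl fun j _ => by push_cast; ring
  have e2 : ∏ j ∈ range b, ((i:ℚ) + j + 1) = ∏ j ∈ range b, (((i:ℕ):ℚ) + j + 1) := by
    refine Finset.prod_congr rfl fun j _ => by push_cast; ring
  rw [prod_div_distrib, e1, e2, prod_cast_add, prod_cast_add]
  have e3 : i + c + b = b + c + i := by omega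
  have e4 : i + b = b + i := by omega
  rw [e3, e4]
  have z1 : ((b+c+i)! : ℚ) ≠ 0 := by exact_mod_cast Nat.factorial_ne_zero _
  have z2 : ((i+c)! : ℚ) ≠ 0 := by exact_mod_cast Nat.factorial_ne_zero _
  have z3 : ((b+i)! : ℚ) ≠ 0 := by exact_mod_cast Nat.factorial_ne_zero _
  have z4 : (i ! : ℚ) ≠ 0 := by exact_mod_cast Nat.factorial_ne_zero _
  have z5 : ((c+i)! : ℚ) ≠ 0 := by exact_mod_cast Nat.factorial_ne_zero _
  have e5 : i + c = c + i := by omega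
  rw [e5]
  field_simp

lemma final_combine (a b c : ℕ) (ha : 0 < a) :
    (∏ j : Fin a, gfun a b c j) * ((∏ k ∈ range a, ((b:ℚ) + c + k + 1) ^ (a - 1 - k))
      * (Nat.superFactorial (a - 1) : ℚ))
    = ∏ i ∈ range a, ((i ! : ℚ) * ((b + c + i)! : ℚ)) / (((b + i)! : ℚ) * ((c + i)! : ℚ)) := by
  have hg : (∏ j : Fin a, gfun a b c j)
      = ∏ j ∈ range a, ((b + c)! : ℚ) / (((c + j)! : ℚ) * ((b + j)! : ℚ)) := by
    simp only [gfun]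
    rw [Fin.prod_univ_eq_prod_range
        (fun j => ((b + c)! : ℚ) / (((c + j)! : ℚ) * ((b + (a - 1 - j))! : ℚ))) a, prod_div_distrib, prod_div_distrib, prod_mul_distrib, prod_mul_distrib,
      Finset.prod_range_reflect (fun j => ((b + j)! : ℚ)) a]
  have hsw : (∏ k ∈ range a, ((b:ℚ) + c + k + 1) ^ (a - 1 - k))
      = ∏ i ∈ range a, ((b + c + i)! : ℚ) / ((b + c)! : ℚ) := by
    rw [← L1 a (fun m => (b:ℚ) + c + m + 1)]
    refine prod_congr rfl fun i _ => ?_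
    have : ∏ m ∈ range i, ((b:ℚ) + c + m + 1) = ∏ m ∈ range i, (((b+c:ℕ):ℚ) + m + 1) := by
      refine prod_congr rfl fun m _ => by push_cast; ring
    rw [this, prod_cast_add]
  have hsf : (Nat.superFactorial (a - 1) : ℚ) = ∏ i ∈ range a, (i ! : ℚ) := by
    have := Nat.prod_range_succ_factorial (a - 1)
    rw [show a - 1 + 1 = a by omega] at this
    exact_mod_cast (congrArg (Nat.cast : ℕ → ℚ) this).symm
  rw [hg, hsw, hsf, ← prod_mul_distrib, ← prod_mul_distrib]
  refine prod_congr rfl fun i _ => ?_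
  have z1 : ((b+c+i)! : ℚ) ≠ 0 := by exact_mod_cast Nat.factorial_ne_zero _
  have z2 : ((b+c)! : ℚ) ≠ 0 := by exact_mod_cast Nat.factorial_ne_zero _
  have z3 : ((b+i)! : ℚ) ≠ 0 := by exact_mod_cast Nat.factorial_ne_zero _
  have z4 : ((c+i)! : ℚ) ≠ 0 := by exact_mod_cast Nat.factorial_ne_zero _
  field_simp


end Aux

/-- `det (binom(b+c, c+j-i))_{1 ≤ i,j ≤ a}` equals
MacMahon's product formula. -/
theorem statement_7 (a b c : ℕ) (ha : 0 < a) (hb : 0 < b) (hc : 0 < c) :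
    (Matrix.of fun i j : Fin a =>
        ibinom ((b : ℤ) + c) ((c : ℤ) + ((j : ℕ) + 1) - ((i : ℕ) + 1))).det
      = macmahon a b c := by
  obtain ⟨n, rfl⟩ : ∃ n, a = n + 1 := ⟨a - 1, by omega⟩
  have hM : (Matrix.of fun i j : Fin (n+1) =>
      ibinom ((b : ℤ) + c) ((c : ℤ) + ((j : ℕ) + 1) - ((i : ℕ) + 1)))
      = Matrix.of fun i j : Fin (n+1) => gfun (n+1) b c j * sweepM (n+1) b c 0 i j := by
    ext i j
    exact entry_eq (n+1) b c hb i j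
  rw [hM, Matrix.det_mul_row (fun j => gfun (n+1) b c j)]
  have master : ∀ m : ℕ, (sweepM (n+1) b c 0).det
      = (∏ k ∈ Finset.range m, ((b:ℚ) + c + k + 1) ^ (n + 1 - 1 - k))
        * (sweepM (n+1) b c m).det := by
    intro m
    induction m with
    | zero => simp
    | succ m ih =>
        rw [ih, sweep_step, Finset.prod_range_succ]
        ring
  rw [master (n+1), sweep_final, macmahon_closed]
  exact final_combine (n+1) b c (by omega)
end

section
/- Let $a,b,c$ be positive integers. Then $\prod_{i=1}^{a} A(b,c,i,i)\cdot C(b,c,i,i) = \prod_{i=1}^{a}\prod_{j=1}^{b}\prod_{k=1}^{c}\frac{i+j+k-1}{i+j+k-2}$; equivalently, $\prod_{i=1}^{a}\frac{(i-1)!\,(b+c+i-1)!}{(b+i-1)!\,(c+i-1)!} = \prod_{i=1}^{a}\prod_{j=1}^{b}\prod_{k=1}^{c}\frac{i+j+k-1}{i+j+k-2}$. -/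
lemma fne (n : ℕ) : (Nat.factorial n : ℚ) ≠ 0 := by
  exact_mod_cast Nat.factorial_ne_zero n

lemma tel (x : ℚ) (hx : 0 < x) (c : ℕ) :
    ∏ k ∈ Finset.Icc 1 c, ((x + k) / (x + k - 1)) = (x + c) / x := by
  induction c with
  | zero => simp [div_self hx.ne']
  | succ n ih =>
    have h1 : (0:ℚ) < x + n := by positivity
    rw [Finset.prod_Icc_succ_top (by omega : 1 ≤ n + 1), ih]
    push_cast
    rw [show x + (↑n + 1) - 1 = x + n by ring, div_mul_div_comm,
      div_eq_div_iff (mul_ne_zero hx.ne' h1.ne') hx.ne']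
    ring

lemma tel3 (p c : ℕ) (b : ℕ) :
    ∏ j ∈ Finset.Icc 1 b, (((p:ℚ) + c + j) / ((p:ℚ) + j)) =
    (Nat.factorial p * Nat.factorial (p + b + c) : ℚ) /
      (Nat.factorial (p + c) * Nat.factorial (p + b)) := by
  induction b with
  | zero =>
    rw [Finset.Icc_eq_empty (by omega), Finset.prod_empty, Nat.add_zero]
    rw [eq_div_iff (mul_ne_zero (fne _) (fne _))]
    ring
  | succ n ih =>
    rw [Finset.prod_Icc_succ_top (by omega : 1 ≤ n + 1), ih]
    have e1 : p + (n+1) + c = (p + n + c) + 1 := by omega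
    have e2 : p + (n+1) = (p + n) + 1 := by omega
    rw [e1, e2, Nat.factorial_succ, Nat.factorial_succ]
    have h1 := fne p; have h2 := fne (p+n+c); have h3 := fne (p+c); have h4 := fne (p+n)
    have h5 : ((p:ℚ) + (n + 1)) ≠ 0 := by positivity
    push_cast at *
    field_simp
    ring

lemma inner (i b c : ℕ) (hi : 1 ≤ i) :
    ∏ j ∈ Finset.Icc 1 b, ∏ k ∈ Finset.Icc 1 c,
      (((i : ℚ) + j + k - 1) / ((i : ℚ) + j + k - 2)) =
    (Nat.factorial (i-1) * Nat.factorial (b + c + i - 1) : ℚ) /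
      (Nat.factorial (b + i - 1) * Nat.factorial (c + i - 1)) := by
  obtain ⟨p, rfl⟩ : ∃ p, i = p + 1 := ⟨i - 1, by omega⟩
  have step : ∀ j ∈ Finset.Icc 1 b, (∏ k ∈ Finset.Icc 1 c,
      ((((p+1:ℕ)) : ℚ) + j + k - 1) / ((((p+1:ℕ)) : ℚ) + j + k - 2))
      = ((p:ℚ) + c + j) / ((p:ℚ) + j) := by
    intro j hj
    simp only [Finset.mem_Icc] at hj
    have hj1 : (1:ℚ) ≤ (j:ℚ) := by exact_mod_cast hj.1
    have hx : (0:ℚ) < (p:ℚ) + j := by positivity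
    calc ∏ k ∈ Finset.Icc 1 c, ((((p+1:ℕ)) : ℚ) + j + k - 1) / ((((p+1:ℕ)) : ℚ) + j + k - 2)
        = ∏ k ∈ Finset.Icc 1 c, ((((p:ℚ) + j) + k) / (((p:ℚ) + j) + k - 1)) := by
          apply Finset.prod_congr rfl
          intro k _
          congr 1 <;> push_cast <;> ring
      _ = (((p:ℚ) + j) + c) / ((p:ℚ) + j) := tel _ hx c
      _ = ((p:ℚ) + c + j) / ((p:ℚ) + j) := by ring_nf
  rw [Finset.prod_congr rfl step, tel3 p c b]
  have e1 : (p+1) - 1 = p := by omega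
  have e2 : b + c + (p+1) - 1 = p + b + c := by omega
  have e3 : b + (p+1) - 1 = p + b := by omega
  have e4 : c + (p+1) - 1 = p + c := by omega
  rw [e1, e2, e3, e4]
  ring

lemma main_eq (a b c : ℕ) :
    (∏ i ∈ Finset.Icc 1 a,
        (Nat.factorial (i - 1) * Nat.factorial (b + c + i - 1) : ℚ) /
          (Nat.factorial (b + i - 1) * Nat.factorial (c + i - 1)))
      = macmahon a b c := by
  induction a with
  | zero => simp [macmahon]
  | succ n ih =>
    unfold macmahon at *
    rw [Finset.prod_Icc_succ_top (by omega : 1 ≤ n + 1),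
        Finset.prod_Icc_succ_top (by omega : 1 ≤ n + 1), ih, inner (n+1) b c (by omega)]

/-- `∏_{i=1}^{a} A(b,c,i,i) C(b,c,i,i)` equals MacMahon's product;
equivalently `∏_{i=1}^{a} (i-1)!(b+c+i-1)!/((b+i-1)!(c+i-1)!)` equals it. -/
theorem statement_8 (a b c : ℕ) (ha : 0 < a) (hb : 0 < b) (hc : 0 < c) :
    (∏ i ∈ Finset.Icc 1 a, Afun b c i i * Cfun b c i i) = macmahon a b c ∧
    (∏ i ∈ Finset.Icc 1 a,
        (Nat.factorial (i - 1) * Nat.factorial (b + c + i - 1) : ℚ) /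
          (Nat.factorial (b + i - 1) * Nat.factorial (c + i - 1)))
      = macmahon a b c := by
  refine ⟨?_, main_eq a b c⟩
  rw [← main_eq a b c]
  apply Finset.prod_congr rfl
  intro i hi
  have hA : Afun b c i i = 1 := by
    rw [Afun, if_pos ⟨le_rfl, Nat.le_add_left i c⟩, Nat.sub_self, Nat.add_sub_cancel]
    rw [div_eq_one_iff_eq (by positivity)]
    simp [Nat.factorial_zero]
    ring
  have hC : Cfun b c i i =
      (Nat.factorial (i - 1) * Nat.factorial (b + c + i - 1) : ℚ) /
        (Nat.factorial (b + i - 1) * Nat.factorial (c + i - 1)) := by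
    rw [Cfun, if_pos ⟨le_rfl, Nat.le_add_left i b⟩, Nat.sub_self, Nat.add_sub_cancel]
    rw [div_eq_div_iff (by positivity) (by positivity)]
    simp [Nat.factorial_zero]
    ring
  rw [hA, hC, one_mul]
end

section
/- Let $a,b,c$ be positive integers and $m,n,m',n'$ arbitrary integers, and let $P$ be the $(a+1)\times(a+1)$ matrix over $\mathbb{Q}$ with entries $P_{i,j} = \binom{b+c}{c+j-i}$ for $1\le i,j\le a$; $P_{i,a+1} = \binom{n}{m-i}$ for $1\le i\le a$; $P_{a+1,j} = \binom{n'}{j-m'}$ for $1\le j\le a$; $P_{a+1,a+1} = \binom{n+n'-b-c}{m-m'-c}$. Define $G(t) := \sum_{s=1}^{t} (-1)^{t-s}\binom{b+s-1}{s-1}\binom{c+t-s-1}{c-1}\binom{n}{m-s}$ and $H(t) := \sum_{s=1}^{t} (-1)^{t-s}\binom{c+s-1}{s-1}\binom{b+t-s-1}{b-1}\binom{n'}{s-m'}$. Then $\det(P) = \left(\prod_{i=1}^{a}\prod_{j=1}^{b}\prod_{k=1}^{c}\frac{i+j+k-1}{i+j+k-2}\right)\cdot\left(\binom{n+n'-b-c}{m-m'-c}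 - \sum_{t=1}^{a}\frac{G(t)\cdot H(t)}{\binom{b+c+t-1}{b+t-1}\binom{b+t-1}{t-1}}\right)$. -/
/-- The paper's function `g(a,b,c,l_x,l_y,t)` in the integer parameters
`m = (a+c+1)/2 + l_x`, `n = (b+c)/2 + l_x + l_y`. -/
noncomputable def Gfun (b c : ℕ) (n m : ℤ) (t : ℕ) : ℚ :=
  ∑ s ∈ Finset.Icc 1 t,
    (-1 : ℚ) ^ (t - s) * ((b + s - 1).choose (s - 1) : ℚ) *
      ((c + t - s - 1).choose (c - 1) : ℚ) * ibinom n (m - s)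

/-- The paper's function `g(a,c,b,-r_y,-r_x,t)` in the integer parameters
`m' = (a-c+1)/2 + r_x`, `n' = (b+c)/2 - r_x - r_y`. -/
noncomputable def Hfun (b c : ℕ) (n' m' : ℤ) (t : ℕ) : ℚ :=
  ∑ s ∈ Finset.Icc 1 t,
    (-1 : ℚ) ^ (t - s) * ((c + s - 1).choose (s - 1) : ℚ) *
      ((b + t - s - 1).choose (b - 1) : ℚ) * ibinom n' ((s : ℤ) - m')



open Finset

lemma base1 (N : ℕ) (h : 0 < N) : ∑ j ∈ range (N+1), (-1:ℚ)^j * ((1:ℕ).choose (N-j) : ℚ) = 0 := by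
  have refl : ∑ j ∈ range (N+1), (-1:ℚ)^j * ((1:ℕ).choose (N-j) : ℚ)
      = ∑ j ∈ range (N+1), (-1:ℚ)^(N-j) * ((1:ℕ).choose (N-(N-j)) : ℚ) := by
    rw [← Finset.sum_range_reflect (fun j => (-1:ℚ)^j * ((1:ℕ).choose (N-j) : ℚ)) (N+1)]
    apply Finset.sum_congr rfl
    intro j hj
    congr 2 <;> omega
  rw [refl]
  have sub : ∑ j ∈ range (N+1), (-1:ℚ)^(N-j) * ((1:ℕ).choose (N-(N-j)) : ℚ)
      = ∑ j ∈ range 2, (-1:ℚ)^(N-j) * ((1:ℕ).choose (N-(N-j)) : ℚ) := by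
    symm
    apply Finset.sum_subset (by intro x; simp only [mem_range]; omega)
    intro j hj hj2
    simp only [mem_range, not_lt] at hj hj2
    have : N - (N - j) = j := by omega
    rw [this, Nat.choose_eq_zero_of_lt (by omega)]
    simp
  rw [sub, Finset.sum_range_succ, Finset.sum_range_succ, Finset.sum_range_zero]
  have e0 : N - (N - 0) = 0 := by omega
  have e1 : N - (N - 1) = 1 := by omega
  rw [e0, e1]
  have e2 : N - 0 = (N-1) + 1 := by omega
  rw [e2, pow_succ]
  simp

lemma core1 (c : ℕ) : ∀ N : ℕ, ∑ j ∈ range (N+1),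
    (-1:ℚ)^j * ((c+j).choose j : ℚ) * ((c+1).choose (N-j) : ℚ)
    = if N = 0 then 1 else 0 := by
  induction c with
  | zero =>
    intro N
    rcases Nat.eq_zero_or_pos N with h | h
    · subst h; simp
    · rw [if_neg h.ne']
      have tw : ∀ j ∈ range (N+1), (-1:ℚ)^j * ((0+j).choose j : ℚ) * ((0+1).choose (N-j) : ℚ)
          = (-1:ℚ)^j * ((1:ℕ).choose (N-j) : ℚ) := by
        intro j hj; rw [zero_add, Nat.choose_self]; norm_num
      exact (Finset.sum_congr rfl tw).trans (base1 N h)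
  | succ c ih =>
    intro N
    -- abbreviations
    set S₂ : ℚ := ∑ j ∈ range N, (-1:ℚ)^j * ((c+1+j).choose j : ℚ) * ((c+1).choose (N-1-j) : ℚ) with hS₂
    have step1 : ∑ j ∈ range (N+1), (-1:ℚ)^j * ((c+1+j).choose j : ℚ) * ((c+2).choose (N-j) : ℚ)
        = (∑ j ∈ range (N+1), (-1:ℚ)^j * ((c+1+j).choose j : ℚ) * ((c+1).choose (N-j) : ℚ)) + S₂ := by
      rw [Finset.sum_range_succ, Finset.sum_range_succ
        (fun j => (-1:ℚ)^j * ((c+1+j).choose j : ℚ) * ((c+1).choose (N-j) : ℚ)), hS₂]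
      have tw : ∀ j ∈ range N, (-1:ℚ)^j * ((c+1+j).choose j : ℚ) * ((c+2).choose (N-j) : ℚ)
          = (-1:ℚ)^j * ((c+1+j).choose j : ℚ) * ((c+1).choose (N-j) : ℚ)
            + (-1:ℚ)^j * ((c+1+j).choose j : ℚ) * ((c+1).choose (N-1-j) : ℚ) := by
        intro j hj
        simp only [mem_range] at hj
        have h1 : N - j = (N - 1 - j) + 1 := by omega
        rw [h1, Nat.choose_succ_succ' (c+1) (N-1-j)]
        have h2 : (N-1-j)+1 = N - j := by omega
        rw [h2]
        push_cast; ring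
      rw [Finset.sum_congr rfl tw, Finset.sum_add_distrib]
      have : N - N = 0 := by omega
      rw [this]
      simp only [Nat.choose_zero_right]
      ring
    have step2 : ∑ j ∈ range (N+1), (-1:ℚ)^j * ((c+1+j).choose j : ℚ) * ((c+1).choose (N-j) : ℚ)
        = (if N = 0 then 1 else 0) - S₂ := by
      rw [Finset.sum_range_succ' (fun j => (-1:ℚ)^j * ((c+1+j).choose j : ℚ) * ((c+1).choose (N-j) : ℚ)) N]
      have tw : ∀ j ∈ range N,
          (-1:ℚ)^(j+1) * ((c+1+(j+1)).choose (j+1) : ℚ) * ((c+1).choose (N-(j+1)) : ℚ)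
          = (-1:ℚ)^(j+1) * ((c+(j+1)).choose (j+1) : ℚ) * ((c+1).choose (N-(j+1)) : ℚ)
            - (-1:ℚ)^j * ((c+1+j).choose j : ℚ) * ((c+1).choose (N-1-j) : ℚ) := by
        intro j hj
        have e0 : c+1+(j+1) = (c+j+1)+1 := by omega
        rw [e0, Nat.choose_succ_succ (c+j+1) j]
        have e3 : N-(j+1) = N-1-j := by omega
        rw [show c+(j+1) = c+j+1 from by omega, show c+1+j = c+j+1 from by omega, e3]
        push_cast
        ring
      rw [Finset.sum_congr rfl tw, Finset.sum_sub_distrib, ← hS₂]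
      have recomb : (∑ j ∈ range N, (-1:ℚ)^(j+1) * ((c+(j+1)).choose (j+1) : ℚ) * ((c+1).choose (N-(j+1)) : ℚ))
          + (-1:ℚ)^0 * ((c+1+0).choose 0 : ℚ) * ((c+1).choose (N-0) : ℚ)
          = ∑ j ∈ range (N+1), (-1:ℚ)^j * ((c+j).choose j : ℚ) * ((c+1).choose (N-j) : ℚ) := by
        rw [Finset.sum_range_succ' (fun j => (-1:ℚ)^j * ((c+j).choose j : ℚ) * ((c+1).choose (N-j) : ℚ)) N]
        simp
      calc (∑ j ∈ range N, (-1:ℚ)^(j+1) * ((c+(j+1)).choose (j+1) : ℚ) * ((c+1).choose (N-(j+1)) : ℚ)) - S₂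
            + (-1:ℚ)^0 * ((c+1+0).choose 0 : ℚ) * ((c+1).choose (N-0) : ℚ)
          = ((∑ j ∈ range N, (-1:ℚ)^(j+1) * ((c+(j+1)).choose (j+1) : ℚ) * ((c+1).choose (N-(j+1)) : ℚ))
            + (-1:ℚ)^0 * ((c+1+0).choose 0 : ℚ) * ((c+1).choose (N-0) : ℚ)) - S₂ := by ring
        _ = (∑ j ∈ range (N+1), (-1:ℚ)^j * ((c+j).choose j : ℚ) * ((c+1).choose (N-j) : ℚ)) - S₂ := by rw [recomb]
        _ = (if N = 0 then 1 else 0) - S₂ := by rw [ih N]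
    rw [step1, step2]
    ring

def Sfun (b c p q : ℕ) : ℚ :=
  ∑ v ∈ range (p+1), if v ≤ q then
    ((b+c+v).choose v : ℚ) * (c.choose (p-v) : ℚ) * (b.choose (q-v) : ℚ) else 0

lemma fact_ne (n : ℕ) : (n.factorial : ℚ) ≠ 0 := by
  exact_mod_cast n.factorial_pos.ne'

lemma trinom (c p q : ℕ) (hqp : q ≤ p) :
    ((c+q).choose q : ℚ) * (c.choose (p-q) : ℚ) = (p.choose q : ℚ) * ((c+q).choose p : ℚ) := by
  by_cases hp : p ≤ c + q
  · have h1 : q ≤ c + q := by omega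
    have h2 : p - q ≤ c := by omega
    rw [Nat.cast_choose ℚ h1, Nat.cast_choose ℚ h2, Nat.cast_choose ℚ hqp, Nat.cast_choose ℚ hp]
    rw [show c + q - q = c from by omega, show c - (p - q) = c + q - p from by omega]
    field_simp
  · rw [Nat.choose_eq_zero_of_lt (show c < p - q from by omega),
      Nat.choose_eq_zero_of_lt (show c + q < p from by omega)]
    simp

lemma core2 (c b : ℕ) : ∀ p q : ℕ, Sfun b c p q = ((b+p).choose q : ℚ) * ((c+q).choose p : ℚ) := by
  induction b with
  | zero =>
    intro p q
    by_cases hqp : q ≤ p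
    · have : Sfun 0 c p q = ((c+q).choose q : ℚ) * (c.choose (p-q) : ℚ) := by
        rw [Sfun, Finset.sum_eq_single q]
        · rw [if_pos le_rfl, show q - q = 0 from by omega]
          simp
        · intro v hv hvq
          simp only [mem_range] at hv
          rcases Nat.lt_or_ge v q with h | h
          · rw [if_pos (le_of_lt h), Nat.choose_eq_zero_of_lt (show 0 < q - v from by omega)]
            simp
          · rw [if_neg (by omega)]
        · intro hq
          exact absurd (mem_range.mpr (by omega)) hq
      rw [this, trinom c p q hqp, zero_add]
    · have : Sfun 0 c p q = 0 := by
        rw [Sfun]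
        apply Finset.sum_eq_zero
        intro v hv
        simp only [mem_range] at hv
        by_cases h : v ≤ q
        · rw [if_pos h, Nat.choose_eq_zero_of_lt (show 0 < q - v from by omega)]
          simp
        · rw [if_neg h]
      rw [this, zero_add, Nat.choose_eq_zero_of_lt (show p < q from by omega)]
      simp
  | succ b ihb =>
    intro p
    induction p with
    | zero =>
      intro q
      rw [Sfun, Finset.sum_range_one, if_pos (Nat.zero_le q)]
      simp
    | succ p ihp =>
      intro q
      rcases Nat.eq_zero_or_pos q with hq | hq
      · subst hq
        rw [Sfun, Finset.sum_eq_single 0]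
        · rw [if_pos le_rfl]
          simp
        · intro v hv hv0
          rw [if_neg (by omega)]
        · intro h0
          exact absurd (mem_range.mpr (by omega)) h0
      · obtain ⟨q₀, rfl⟩ : ∃ q₀, q = q₀ + 1 := ⟨q - 1, by omega⟩
        -- termwise Pascal split
        have split1 : Sfun (b+1) c (p+1) (q₀+1)
            = (∑ v ∈ range (p+2), if v ≤ q₀+1 then
                ((b+c+v).choose v : ℚ) * (c.choose (p+1-v) : ℚ) * ((b+1).choose (q₀+1-v) : ℚ) else 0)
              + (∑ v ∈ range (p+2), if 1 ≤ v ∧ v ≤ q₀+1 then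
                ((b+c+v).choose (v-1) : ℚ) * (c.choose (p+1-v) : ℚ) * ((b+1).choose (q₀+1-v) : ℚ) else 0) := by
          rw [Sfun, ← Finset.sum_add_distrib]
          apply Finset.sum_congr rfl
          intro v hv
          rcases Nat.eq_zero_or_pos v with rfl | hv1
          · rw [if_pos (by omega), if_pos (by omega), if_neg (by omega)]
            simp
          · obtain ⟨w, rfl⟩ : ∃ w, v = w + 1 := ⟨v - 1, by omega⟩
            by_cases hg : w + 1 ≤ q₀ + 1
            · rw [if_pos hg, if_pos hg, if_pos (by omega)]
              rw [show b+1+c+(w+1) = (b+c+(w+1))+1 from by omega,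
                Nat.choose_succ_succ (b+c+(w+1)) w]
              rw [show w+1-1 = w from by omega]
              push_cast
              ring
            · rw [if_neg hg, if_neg hg, if_neg (by omega)]
              simp
        have sum2 : (∑ v ∈ range (p+2), if 1 ≤ v ∧ v ≤ q₀+1 then
              ((b+c+v).choose (v-1) : ℚ) * (c.choose (p+1-v) : ℚ) * ((b+1).choose (q₀+1-v) : ℚ) else 0)
            = Sfun (b+1) c p q₀ := by
          rw [Finset.sum_range_succ' (fun v => if 1 ≤ v ∧ v ≤ q₀+1 then
              ((b+c+v).choose (v-1) : ℚ) * (c.choose (p+1-v) : ℚ) * ((b+1).choose (q₀+1-v) : ℚ) else 0) (p+1)]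
          rw [if_neg (by omega), add_zero, Sfun]
          apply Finset.sum_congr rfl
          intro w hw
          by_cases hg : w ≤ q₀
          · rw [if_pos (by omega), if_pos hg]
            rw [show w+1-1 = w from by omega, show p+1-(w+1) = p - w from by omega,
              show q₀+1-(w+1) = q₀ - w from by omega, show b+c+(w+1) = b+1+c+w from by omega]
          · rw [if_neg (by omega), if_neg hg]
        have sum1 : (∑ v ∈ range (p+2), if v ≤ q₀+1 then
              ((b+c+v).choose v : ℚ) * (c.choose (p+1-v) : ℚ) * ((b+1).choose (q₀+1-v) : ℚ) else 0)
            = Sfun b c (p+1) (q₀+1) + Sfun b c (p+1) q₀ := by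
          rw [Sfun, Sfun, ← Finset.sum_add_distrib]
          apply Finset.sum_congr rfl
          intro v hv
          by_cases hg : v ≤ q₀
          · rw [if_pos (by omega), if_pos (by omega), if_pos hg]
            rw [show q₀+1-v = (q₀-v)+1 from by omega, Nat.choose_succ_succ b (q₀-v)]
            push_cast
            ring
          · by_cases hg2 : v ≤ q₀ + 1
            · rw [if_pos hg2, if_pos hg2, if_neg hg]
              rw [show q₀+1-v = 0 from by omega]
              simp
            · rw [if_neg hg2, if_neg hg2, if_neg hg]
              simp
        rw [split1, sum1, sum2, ihb (p+1) (q₀+1), ihb (p+1) q₀, ihp q₀]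
        -- RHS Pascal assembly
        have e1 : b+1+(p+1) = (b+(p+1))+1 := by omega
        rw [e1, Nat.choose_succ_succ (b+(p+1)) q₀]
        have e2 : c+(q₀+1) = (c+q₀)+1 := by omega
        rw [e2, Nat.choose_succ_succ (c+q₀) p]
        rw [show b+1+p = b+(p+1) from by omega]
        push_cast
        ring


noncomputable def DC (b c k v : ℕ) : ℚ :=
  (-1 : ℚ) ^ (k - v) *
    ((Nat.factorial (k - 1) * Nat.factorial (b + v - 1) * Nat.factorial (c + k - v - 1) : ℚ) /
      (Nat.factorial (c - 1) * Nat.factorial (v - 1) * Nat.factorial (b + k - 1) *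
        Nat.factorial (k - v)))

noncomputable def BCc (b c k v : ℕ) : ℚ :=
  (-1 : ℚ) ^ (k - v) *
    ((Nat.factorial (b + k - 1) * Nat.factorial (c + v - 1) * Nat.factorial (b + k - v - 1) : ℚ) /
      (Nat.factorial (b - 1) * Nat.factorial (v - 1) * Nat.factorial (k - v) *
        Nat.factorial (b + c + k - 1)))

lemma AD_term (b c : ℕ) (hc : 1 ≤ c) (i v k : ℕ) (hv : 1 ≤ v) (hvk : v ≤ k) (hki : k ≤ i) :
    Afun b c i k * DC b c k v
    = (((i-1).factorial * (b+v-1).factorial : ℚ) / ((b+i-1).factorial * (v-1).factorial))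
      * ((-1:ℚ)^(k-v) * (((c-1)+(k-v)).choose (k-v) : ℚ)
          * (((c-1)+1).choose ((i-v)-(k-v)) : ℚ)) := by
  have e1 : (i-v)-(k-v) = i-k := by omega
  have e2 : (c-1)+1 = c := by omega
  by_cases hA : i ≤ c + k
  · rw [Afun, if_pos ⟨hki, hA⟩, DC, e1, e2]
    rw [Nat.cast_choose ℚ (show (k-v) ≤ (c-1)+(k-v) from by omega)]
    rw [show (c-1)+(k-v) - (k-v) = c-1 from by omega]
    rw [Nat.cast_choose ℚ (show i-k ≤ c from by omega)]
    rw [show c - (i-k) = c+k-i from by omega]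
    rw [show c+k-v-1 = (c-1)+(k-v) from by omega]
    push_cast
    field_simp
  · rw [Afun, if_neg (by omega), e1, e2]
    rw [Nat.choose_eq_zero_of_lt (show c < i-k from by omega)]
    simp

lemma AD (b c : ℕ) (hc : 1 ≤ c) (a i v : ℕ) (hi : 1 ≤ i) (hia : i ≤ a) (hv : 1 ≤ v) :
    ∑ k ∈ Icc v a, Afun b c i k * DC b c k v = if i = v then 1 else 0 := by
  rcases Nat.lt_or_ge i v with hiv | hiv
  · rw [if_neg (by omega)]
    apply Finset.sum_eq_zero
    intro k hk
    simp only [mem_Icc] at hk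
    rw [Afun, if_neg (by omega), zero_mul]
  · -- v ≤ i
    have h1 : ∑ k ∈ Icc v a, Afun b c i k * DC b c k v
        = ∑ k ∈ Icc v i, Afun b c i k * DC b c k v := by
      symm
      apply Finset.sum_subset
      · intro x hx; simp only [mem_Icc] at hx ⊢; omega
      · intro k hk hk2
        simp only [mem_Icc] at hk hk2
        rw [Afun, if_neg (by omega), zero_mul]
    have h2 : ∑ k ∈ Icc v i, Afun b c i k * DC b c k v
        = ∑ j ∈ range ((i-v)+1), Afun b c i (v+j) * DC b c (v+j) v := by
      rw [← Finset.Ico_add_one_right_eq_Icc, Finset.sum_Ico_eq_sum_range,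
        show i+1-v = (i-v)+1 from by omega]
    rw [h1, h2]
    have h3 : ∀ j ∈ range ((i-v)+1), Afun b c i (v+j) * DC b c (v+j) v
        = (((i-1).factorial * (b+v-1).factorial : ℚ) / ((b+i-1).factorial * (v-1).factorial))
          * ((-1:ℚ)^j * (((c-1)+j).choose j : ℚ) * (((c-1)+1).choose ((i-v)-j) : ℚ)) := by
      intro j hj
      simp only [mem_range] at hj
      rw [AD_term b c hc i v (v+j) hv (by omega) (by omega)]
      rw [show v+j-v = j from by omega]
    rw [Finset.sum_congr rfl h3, ← Finset.mul_sum, core1 (c-1) (i-v)]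
    rcases Nat.eq_or_lt_of_le hiv with rfl | hlt
    · rw [if_pos (by omega), if_pos rfl]
      field_simp
    · rw [if_neg (by omega), if_neg (by omega), mul_zero]

lemma BC_term (b c : ℕ) (hb : 1 ≤ b) (j v k : ℕ) (hv : 1 ≤ v) (hvk : v ≤ k) (hkj : k ≤ j) :
    BCc b c k v * Cfun b c k j
    = (((c+v-1).factorial * (j-1).factorial : ℚ) / ((v-1).factorial * (c+j-1).factorial))
      * ((-1:ℚ)^(k-v) * (((b-1)+(k-v)).choose (k-v) : ℚ)
          * (((b-1)+1).choose ((j-v)-(k-v)) : ℚ)) := by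
  have e1 : (j-v)-(k-v) = j-k := by omega
  have e2 : (b-1)+1 = b := by omega
  by_cases hC : j ≤ b + k
  · rw [Cfun, if_pos ⟨hkj, hC⟩, BCc, e1, e2]
    rw [Nat.cast_choose ℚ (show (k-v) ≤ (b-1)+(k-v) from by omega)]
    rw [show (b-1)+(k-v) - (k-v) = b-1 from by omega]
    rw [Nat.cast_choose ℚ (show j-k ≤ b from by omega)]
    rw [show b - (j-k) = b+k-j from by omega]
    rw [show b+k-v-1 = (b-1)+(k-v) from by omega]
    push_cast
    field_simp
  · rw [Cfun, if_neg (by omega), e1, e2]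
    rw [Nat.choose_eq_zero_of_lt (show b < j-k from by omega)]
    simp

lemma BC (b c : ℕ) (hb : 1 ≤ b) (a j v : ℕ) (hj : 1 ≤ j) (hja : j ≤ a) (hv : 1 ≤ v) :
    ∑ k ∈ Icc v a, BCc b c k v * Cfun b c k j = if j = v then 1 else 0 := by
  rcases Nat.lt_or_ge j v with hjv | hjv
  · rw [if_neg (by omega)]
    apply Finset.sum_eq_zero
    intro k hk
    simp only [mem_Icc] at hk
    rw [Cfun, if_neg (by omega), mul_zero]
  · have h1 : ∑ k ∈ Icc v a, BCc b c k v * Cfun b c k j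
        = ∑ k ∈ Icc v j, BCc b c k v * Cfun b c k j := by
      symm
      apply Finset.sum_subset
      · intro x hx; simp only [mem_Icc] at hx ⊢; omega
      · intro k hk hk2
        simp only [mem_Icc] at hk hk2
        rw [Cfun, if_neg (by omega), mul_zero]
    have h2 : ∑ k ∈ Icc v j, BCc b c k v * Cfun b c k j
        = ∑ s ∈ range ((j-v)+1), BCc b c (v+s) v * Cfun b c (v+s) j := by
      rw [← Finset.Ico_add_one_right_eq_Icc, Finset.sum_Ico_eq_sum_range,
        show j+1-v = (j-v)+1 from by omega]
    rw [h1, h2]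
    have h3 : ∀ s ∈ range ((j-v)+1), BCc b c (v+s) v * Cfun b c (v+s) j
        = (((c+v-1).factorial * (j-1).factorial : ℚ) / ((v-1).factorial * (c+j-1).factorial))
          * ((-1:ℚ)^s * (((b-1)+s).choose s : ℚ) * (((b-1)+1).choose ((j-v)-s) : ℚ)) := by
      intro s hs
      simp only [mem_range] at hs
      rw [BC_term b c hb j v (v+s) hv (by omega) (by omega)]
      rw [show v+s-v = s from by omega]
    rw [Finset.sum_congr rfl h3, ← Finset.mul_sum, core1 (b-1) (j-v)]
    rcases Nat.eq_or_lt_of_le hjv with rfl | hlt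
    · rw [if_pos (by omega), if_pos rfl]
      field_simp
    · rw [if_neg (by omega), if_neg (by omega), mul_zero]

lemma AC (b c : ℕ) (hb : 1 ≤ b) (hc : 1 ≤ c) (a i j : ℕ)
    (hi : 1 ≤ i) (hia : i ≤ a) (hj : 1 ≤ j) (hja : j ≤ a) :
    ∑ k ∈ Icc 1 a, Afun b c i k * Cfun b c k j = ibinom ((b:ℤ)+c) ((c:ℤ)+j-i) := by
  set κ : ℚ := ((b+c).factorial * (i-1).factorial * (j-1).factorial : ℚ)
      / ((b+i-1).factorial * (c+j-1).factorial) with hκ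
  have h1 : ∑ k ∈ Icc 1 a, Afun b c i k * Cfun b c k j
      = ∑ k ∈ Icc 1 (min i j), Afun b c i k * Cfun b c k j := by
    symm
    apply Finset.sum_subset
    · intro x hx; simp only [mem_Icc] at hx ⊢; omega
    · intro k hk hk2
      simp only [mem_Icc] at hk hk2
      by_cases hki : k ≤ i
      · rw [Cfun, if_neg (by omega), mul_zero]
      · rw [Afun, if_neg (by omega), zero_mul]
  have h2 : ∑ k ∈ Icc 1 (min i j), Afun b c i k * Cfun b c k j
      = ∑ v ∈ range (min i j), Afun b c i (1+v) * Cfun b c (1+v) j := by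
    rw [← Finset.Ico_add_one_right_eq_Icc, Finset.sum_Ico_eq_sum_range,
      show min i j + 1 - 1 = min i j from by omega]
  have h3 : ∀ v ∈ range (min i j), Afun b c i (1+v) * Cfun b c (1+v) j
      = κ * (if v ≤ j-1 then
          ((b+c+v).choose v : ℚ) * (c.choose ((i-1)-v) : ℚ) * (b.choose ((j-1)-v) : ℚ) else 0) := by
    intro v hv
    simp only [mem_range, lt_min_iff] at hv
    rw [if_pos (by omega)]
    by_cases hA : i ≤ c + (1+v)
    · by_cases hC : j ≤ b + (1+v)
      · rw [Afun, if_pos ⟨by omega, hA⟩, Cfun, if_pos ⟨by omega, hC⟩]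
        rw [Nat.cast_choose ℚ (show v ≤ b+c+v from by omega),
          show b+c+v - v = b+c from by omega]
        rw [Nat.cast_choose ℚ (show (i-1)-v ≤ c from by omega),
          show c - ((i-1)-v) = c+(1+v)-i from by omega]
        rw [Nat.cast_choose ℚ (show (j-1)-v ≤ b from by omega),
          show b - ((j-1)-v) = b+(1+v)-j from by omega]
        rw [show i-(1+v) = (i-1)-v from by omega, show j-(1+v) = (j-1)-v from by omega,
          show b+c+(1+v)-1 = b+c+v from by omega, show (1+v)-1 = v from by omega]
        rw [hκ]
        push_cast
        field_simp
      · rw [Cfun, if_neg (by omega), mul_zero,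
          Nat.choose_eq_zero_of_lt (show b < (j-1)-v from by omega)]
        simp
    · rw [Afun, if_neg (by omega), zero_mul,
        Nat.choose_eq_zero_of_lt (show c < (i-1)-v from by omega)]
      simp
  have h4 : ∑ v ∈ range (min i j), κ * (if v ≤ j-1 then
        ((b+c+v).choose v : ℚ) * (c.choose ((i-1)-v) : ℚ) * (b.choose ((j-1)-v) : ℚ) else 0)
      = ∑ v ∈ range ((i-1)+1), κ * (if v ≤ j-1 then
        ((b+c+v).choose v : ℚ) * (c.choose ((i-1)-v) : ℚ) * (b.choose ((j-1)-v) : ℚ) else 0) := by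
    apply Finset.sum_subset
    · intro x hx; simp only [mem_range] at hx ⊢; omega
    · intro v hv hv2
      simp only [mem_range] at hv hv2
      rw [if_neg (by omega), mul_zero]
  rw [h1, h2, Finset.sum_congr rfl h3, h4, ← Finset.mul_sum]
  have h5 : ∑ v ∈ range ((i-1)+1), (if v ≤ j-1 then
        ((b+c+v).choose v : ℚ) * (c.choose ((i-1)-v) : ℚ) * (b.choose ((j-1)-v) : ℚ) else 0)
      = Sfun b c (i-1) (j-1) := rfl
  rw [h5, core2 c b (i-1) (j-1),
    show b+(i-1) = b+i-1 from by omega, show c+(j-1) = c+j-1 from by omega]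
  by_cases hij1 : i ≤ c + j
  · by_cases hij2 : j ≤ b + i
    · rw [ibinom, if_pos ⟨by push_cast; omega, by push_cast; omega⟩]
      rw [show ((b:ℤ)+c).toNat = b+c from by omega,
        show (((b:ℤ)+c) - ((c:ℤ)+j-i)).toNat = b+i-j from by omega,
        show ((c:ℤ)+j-i).toNat = c+j-i from by omega]
      rw [Nat.cast_choose ℚ (show j-1 ≤ b+i-1 from by omega),
        show b+i-1-(j-1) = b+i-j from by omega]
      rw [Nat.cast_choose ℚ (show i-1 ≤ c+j-1 from by omega),
        show c+j-1-(i-1) = c+j-i from by omega]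
      rw [hκ]
      field_simp
    · rw [ibinom, if_neg (by push_cast; omega),
        Nat.choose_eq_zero_of_lt (show b+i-1 < j-1 from by omega)]
      simp
  · rw [ibinom, if_neg (by push_cast; omega),
      Nat.choose_eq_zero_of_lt (show c+j-1 < i-1 from by omega)]
    simp

lemma AD_apply (b c : ℕ) (hc : 1 ≤ c) (n m : ℤ) (a i : ℕ) (hi : 1 ≤ i) (hia : i ≤ a) :
    ∑ k ∈ Icc 1 a, Afun b c i k * Dfun b c n m k = ibinom n (m - i) := by
  have step_k : ∀ k ∈ Icc 1 a, Afun b c i k * Dfun b c n m k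
      = ∑ v ∈ Icc 1 a, (if v ≤ k then Afun b c i k * DC b c k v * ibinom n (m - v) else 0) := by
    intro k hk
    simp only [mem_Icc] at hk
    rw [Dfun, Finset.mul_sum]
    rw [show ∑ v ∈ Icc 1 k, Afun b c i k * ((-1 : ℚ) ^ (k - v) *
        ((Nat.factorial (k - 1) * Nat.factorial (b + v - 1) * Nat.factorial (c + k - v - 1) : ℚ) /
          (Nat.factorial (c - 1) * Nat.factorial (v - 1) * Nat.factorial (b + k - 1) *
            Nat.factorial (k - v))) * ibinom n (m - v))
        = ∑ v ∈ Icc 1 k, (if v ≤ k then Afun b c i k * DC b c k v * ibinom n (m - v) else 0) from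
      Finset.sum_congr rfl (fun v hv => by
        simp only [mem_Icc] at hv
        rw [if_pos hv.2, DC]
        ring)]
    apply Finset.sum_subset
    · intro x hx; simp only [mem_Icc] at hx ⊢; omega
    · intro v hv hv2
      simp only [mem_Icc] at hv hv2
      rw [if_neg (by omega)]
  rw [Finset.sum_congr rfl step_k, Finset.sum_comm]
  have step_v : ∀ v ∈ Icc 1 a, ∑ k ∈ Icc 1 a,
      (if v ≤ k then Afun b c i k * DC b c k v * ibinom n (m - v) else 0)
      = (if i = v then 1 else 0) * ibinom n (m - v) := by
    intro v hv
    simp only [mem_Icc] at hv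
    have e1 : ∑ k ∈ Icc 1 a, (if v ≤ k then Afun b c i k * DC b c k v * ibinom n (m - v) else 0)
        = ∑ k ∈ Icc v a, Afun b c i k * DC b c k v * ibinom n (m - v) := by
      symm
      rw [show ∑ k ∈ Icc v a, Afun b c i k * DC b c k v * ibinom n (m - v)
          = ∑ k ∈ Icc v a, (if v ≤ k then Afun b c i k * DC b c k v * ibinom n (m - v) else 0) from
        Finset.sum_congr rfl (fun k hk => by
          simp only [mem_Icc] at hk; rw [if_pos hk.1])]
      apply Finset.sum_subset
      · intro x hx; simp only [mem_Icc] at hx ⊢; omega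
      · intro k hk hk2
        simp only [mem_Icc] at hk hk2
        rw [if_neg (by omega)]
    rw [e1, show ∑ k ∈ Icc v a, Afun b c i k * DC b c k v * ibinom n (m - v)
        = (∑ k ∈ Icc v a, Afun b c i k * DC b c k v) * ibinom n (m - v) from
      (Finset.sum_mul _ _ _).symm]
    rw [AD b c hc a i v hi hia hv.1]
  rw [Finset.sum_congr rfl step_v]
  rw [Finset.sum_eq_single i]
  · rw [if_pos rfl, one_mul]
  · intro v hv hvi
    rw [if_neg (fun h => hvi h.symm), zero_mul]
  · intro h
    exact absurd (mem_Icc.mpr ⟨hi, hia⟩) h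

lemma BC_apply (b c : ℕ) (hb : 1 ≤ b) (n' m' : ℤ) (a j : ℕ) (hj : 1 ≤ j) (hja : j ≤ a) :
    ∑ k ∈ Icc 1 a, Bfun b c n' m' k * Cfun b c k j = ibinom n' ((j : ℤ) - m') := by
  have step_k : ∀ k ∈ Icc 1 a, Bfun b c n' m' k * Cfun b c k j
      = ∑ v ∈ Icc 1 a, (if v ≤ k then BCc b c k v * Cfun b c k j * ibinom n' ((v : ℤ) - m') else 0) := by
    intro k hk
    simp only [mem_Icc] at hk
    rw [Bfun, Finset.sum_mul]
    rw [show ∑ v ∈ Icc 1 k, (-1 : ℚ) ^ (k - v) *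
        ((Nat.factorial (b + k - 1) * Nat.factorial (c + v - 1) * Nat.factorial (b + k - v - 1) : ℚ) /
          (Nat.factorial (b - 1) * Nat.factorial (v - 1) * Nat.factorial (k - v) *
            Nat.factorial (b + c + k - 1))) * ibinom n' (v - m') * Cfun b c k j
        = ∑ v ∈ Icc 1 k, (if v ≤ k then BCc b c k v * Cfun b c k j * ibinom n' ((v : ℤ) - m') else 0) from
      Finset.sum_congr rfl (fun v hv => by
        simp only [mem_Icc] at hv
        rw [if_pos hv.2, BCc]
        ring)]
    apply Finset.sum_subset
    · intro x hx; simp only [mem_Icc] at hx ⊢; omega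
    · intro v hv hv2
      simp only [mem_Icc] at hv hv2
      rw [if_neg (by omega)]
  rw [Finset.sum_congr rfl step_k, Finset.sum_comm]
  have step_v : ∀ v ∈ Icc 1 a, ∑ k ∈ Icc 1 a,
      (if v ≤ k then BCc b c k v * Cfun b c k j * ibinom n' ((v : ℤ) - m') else 0)
      = (if j = v then 1 else 0) * ibinom n' ((v : ℤ) - m') := by
    intro v hv
    simp only [mem_Icc] at hv
    have e1 : ∑ k ∈ Icc 1 a, (if v ≤ k then BCc b c k v * Cfun b c k j * ibinom n' ((v : ℤ) - m') else 0)
        = ∑ k ∈ Icc v a, BCc b c k v * Cfun b c k j * ibinom n' ((v : ℤ) - m') := by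
      symm
      rw [show ∑ k ∈ Icc v a, BCc b c k v * Cfun b c k j * ibinom n' ((v : ℤ) - m')
          = ∑ k ∈ Icc v a, (if v ≤ k then BCc b c k v * Cfun b c k j * ibinom n' ((v : ℤ) - m') else 0) from
        Finset.sum_congr rfl (fun k hk => by
          simp only [mem_Icc] at hk; rw [if_pos hk.1])]
      apply Finset.sum_subset
      · intro x hx; simp only [mem_Icc] at hx ⊢; omega
      · intro k hk hk2
        simp only [mem_Icc] at hk hk2
        rw [if_neg (by omega)]
    rw [e1, show ∑ k ∈ Icc v a, BCc b c k v * Cfun b c k j * ibinom n' ((v : ℤ) - m')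
        = (∑ k ∈ Icc v a, BCc b c k v * Cfun b c k j) * ibinom n' ((v : ℤ) - m') from
      (Finset.sum_mul _ _ _).symm]
    rw [BC b c hb a j v hj hja hv.1]
  rw [Finset.sum_congr rfl step_v]
  rw [Finset.sum_eq_single j]
  · rw [if_pos rfl, one_mul]
  · intro v hv hvj
    rw [if_neg (fun h => hvj h.symm), zero_mul]
  · intro h
    exact absurd (mem_Icc.mpr ⟨hj, hja⟩) h

lemma G_eq_D (b c : ℕ) (hc : 1 ≤ c) (n m : ℤ) (t : ℕ) (ht : 1 ≤ t) :
    Gfun b c n m t = Dfun b c n m t * ((b+t-1).choose (t-1) : ℚ) := by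
  rw [Gfun, Dfun, Finset.sum_mul]
  apply Finset.sum_congr rfl
  intro v hv
  simp only [mem_Icc] at hv
  rw [Nat.cast_choose ℚ (show v-1 ≤ b+v-1 from by omega), show b+v-1-(v-1) = b from by omega]
  rw [Nat.cast_choose ℚ (show c-1 ≤ c+t-v-1 from by omega), show c+t-v-1-(c-1) = t-v from by omega]
  rw [Nat.cast_choose ℚ (show t-1 ≤ b+t-1 from by omega), show b+t-1-(t-1) = b from by omega]
  push_cast
  field_simp

lemma H_eq_B (b c : ℕ) (hb : 1 ≤ b) (n' m' : ℤ) (t : ℕ) (ht : 1 ≤ t) :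
    Hfun b c n' m' t = Bfun b c n' m' t * ((b+c+t-1).choose (b+t-1) : ℚ) := by
  rw [Hfun, Bfun, Finset.sum_mul]
  apply Finset.sum_congr rfl
  intro v hv
  simp only [mem_Icc] at hv
  rw [Nat.cast_choose ℚ (show v-1 ≤ c+v-1 from by omega), show c+v-1-(v-1) = c from by omega]
  rw [Nat.cast_choose ℚ (show b-1 ≤ b+t-v-1 from by omega), show b+t-v-1-(b-1) = t-v from by omega]
  rw [Nat.cast_choose ℚ (show b+t-1 ≤ b+c+t-1 from by omega), show b+c+t-1-(b+t-1) = c from by omega]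
  push_cast
  field_simp

lemma tele1 (x : ℚ) (hx : 2 ≤ x) (c : ℕ) :
    ∏ k ∈ Icc 1 c, (x + k - 1)/(x + k - 2) = (x + c - 1)/(x - 1) := by
  induction c with
  | zero =>
    rw [Finset.Icc_eq_empty (by omega : ¬(1:ℕ) ≤ 0), Finset.prod_empty,
      show x + ((0:ℕ):ℚ) - 1 = x - 1 from by push_cast; ring]
    exact (div_self (show x - 1 ≠ 0 from by intro h; linarith)).symm
  | succ c ih =>
    rw [Finset.prod_Icc_succ_top (by omega), ih]
    have h0 : (0:ℚ) ≤ c := Nat.cast_nonneg c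
    have h1 : x - 1 ≠ 0 := by intro h; linarith
    have h2 : x + c - 1 ≠ 0 := by intro h; linarith
    have h3 : x + (c+1:ℕ) - 2 = x + c - 1 := by push_cast; ring
    rw [h3]
    push_cast
    field_simp

lemma tele2 (i c : ℕ) (hi : 1 ≤ i) (b : ℕ) :
    ∏ j ∈ Icc 1 b, (((i:ℚ) + j + c - 1)/((i:ℚ) + j - 1))
    = ((i+b+c-1).factorial * (i-1).factorial : ℚ) / ((i+c-1).factorial * (i+b-1).factorial) := by
  induction b with
  | zero =>
    rw [Finset.Icc_eq_empty (by omega : ¬(1:ℕ) ≤ 0), Finset.prod_empty]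
    rw [show i+0+c-1 = i+c-1 from by omega, show i+0-1 = i-1 from by omega]
    exact (div_self (mul_ne_zero (fact_ne _) (fact_ne _))).symm
  | succ b ih =>
    rw [Finset.prod_Icc_succ_top (by omega), ih]
    rw [show i+(b+1)+c-1 = (i+b+c-1)+1 from by omega, Nat.factorial_succ,
      show i+(b+1)-1 = (i+b-1)+1 from by omega, Nat.factorial_succ]
    have e1 : ((i+b+c-1 : ℕ) : ℚ) = (i:ℚ)+b+c-1 := by
      rw [Nat.cast_sub (by omega : 1 ≤ i+b+c)]; push_cast; ring
    have e2 : ((i+b-1 : ℕ) : ℚ) = (i:ℚ)+b-1 := by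
      rw [Nat.cast_sub (by omega : 1 ≤ i+b)]; push_cast; ring
    have hi1 : (1:ℚ) ≤ (i:ℚ) := by exact_mod_cast hi
    have h0 : (0:ℚ) ≤ b := Nat.cast_nonneg b
    have h0c : (0:ℚ) ≤ c := Nat.cast_nonneg c
    have hib : (i:ℚ) + b ≠ 0 := by intro h; linarith
    push_cast [e1, e2]
    rw [show (i:ℚ)+(b+1)-1 = (i:ℚ)+b from by ring]
    field_simp
    linear_combination (-((i:ℚ)+b+c)) * (mul_inv_cancel₀ hib)

lemma Cdiag (b c t : ℕ) (ht : 1 ≤ t) :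
    Cfun b c t t = ((t-1).factorial * (b+c+t-1).factorial : ℚ)
      / ((b+t-1).factorial * (c+t-1).factorial) := by
  rw [Cfun, if_pos ⟨le_rfl, by omega⟩, show t-t = 0 from by omega,
    show b+t-t = b from by omega, Nat.factorial_zero]
  push_cast
  field_simp

lemma macmahon_eq (a b c : ℕ) (hb : 1 ≤ b) (hc : 1 ≤ c) :
    macmahon a b c = ∏ t ∈ Icc 1 a, Cfun b c t t := by
  rw [macmahon]
  apply Finset.prod_congr rfl
  intro i hi
  simp only [mem_Icc] at hi
  have inner : ∀ j ∈ Icc 1 b, ∏ k ∈ Icc 1 c, (((i:ℚ) + j + k - 1) / ((i:ℚ) + j + k - 2))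
      = ((i:ℚ) + j + c - 1)/((i:ℚ) + j - 1) := by
    intro j hj
    simp only [mem_Icc] at hj
    have h2 : (2:ℚ) ≤ (i:ℚ) + j := by
      have : (2:ℕ) ≤ i + j := by omega
      exact_mod_cast this
    exact tele1 ((i:ℚ) + (j:ℚ)) h2 c
  rw [Finset.prod_congr rfl inner, tele2 i c hi.1 b, Cdiag b c i hi.1]
  rw [show i+b+c-1 = b+c+i-1 from by omega, show i+c-1 = c+i-1 from by omega,
    show i+b-1 = b+i-1 from by omega]
  ring

lemma range_to_Icc (a : ℕ) (g : ℕ → ℚ) : ∑ k ∈ range a, g (k+1) = ∑ t ∈ Icc 1 a, g t := by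
  rw [← Finset.Ico_add_one_right_eq_Icc, Finset.sum_Ico_eq_sum_range, show a+1-1 = a from rfl]
  exact Finset.sum_congr rfl (fun k _ => by rw [Nat.add_comm])

lemma Afun_diag (b c t : ℕ) : Afun b c t t = 1 := by
  rw [Afun, if_pos ⟨le_rfl, by omega⟩, show t-t = 0 from by omega,
    show c+t-t = c from by omega, Nat.factorial_zero]
  push_cast
  rw [div_eq_one_iff_eq (by positivity)]
  ring

/-- the computational content of the paper's main theorem
(Theorem 5.2): the determinant of the lattice path matrix equals MacMahon's
product times the entry of the (candidate) inverse Kasteleyn matrix. -/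
theorem statement_15 (a b c : ℕ) (ha : 0 < a) (hb : 0 < b) (hc : 0 < c) (m n m' n' : ℤ) :
    (Matrix.of fun i j : Fin (a + 1) =>
      if (i : ℕ) < a then
        if (j : ℕ) < a then ibinom ((b : ℤ) + c) ((c : ℤ) + ((j : ℕ) + 1) - ((i : ℕ) + 1))
        else ibinom n (m - ((i : ℕ) + 1))
      else
        if (j : ℕ) < a then ibinom n' ((((j : ℕ) : ℤ) + 1) - m')
        else ibinom (n + n' - b - c) (m - m' - c)).det
    = macmahon a b c *
        (ibinom (n + n' - b - c) (m - m' - c)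
          - ∑ t ∈ Finset.Icc 1 a,
              Gfun b c n m t * Hfun b c n' m' t /
                (((b + c + t - 1).choose (b + t - 1) : ℚ) *
                  ((b + t - 1).choose (t - 1) : ℚ))) := by
  set X : ℚ := ibinom (n + n' - b - c) (m - m' - c)
      - ∑ t ∈ Finset.Icc 1 a, Bfun b c n' m' t * Dfun b c n m t with hX
  set L : Matrix (Fin (a+1)) (Fin (a+1)) ℚ := Matrix.of fun i k : Fin (a+1) =>
      if (i : ℕ) < a then (if (k : ℕ) < a then Afun b c ((i:ℕ)+1) ((k:ℕ)+1) else 0)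
      else (if (k : ℕ) < a then Bfun b c n' m' ((k:ℕ)+1) else 1) with hL
  set U : Matrix (Fin (a+1)) (Fin (a+1)) ℚ := Matrix.of fun k j : Fin (a+1) =>
      if (k : ℕ) < a then (if (j : ℕ) < a then Cfun b c ((k:ℕ)+1) ((j:ℕ)+1)
        else Dfun b c n m ((k:ℕ)+1))
      else (if (j : ℕ) < a then 0 else X) with hU
  have hPLU : (Matrix.of fun i j : Fin (a + 1) =>
      if (i : ℕ) < a then
        if (j : ℕ) < a then ibinom ((b : ℤ) + c) ((c : ℤ) + ((j : ℕ) + 1) - ((i : ℕ) + 1))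
        else ibinom n (m - ((i : ℕ) + 1))
      else
        if (j : ℕ) < a then ibinom n' ((((j : ℕ) : ℤ) + 1) - m')
        else ibinom (n + n' - b - c) (m - m' - c)) = L * U := by
    ext i j
    rw [Matrix.mul_apply]
    have expand : ∑ k : Fin (a+1), L i k * U k j
        = ∑ k ∈ range (a+1), ((if (i : ℕ) < a then (if k < a then Afun b c ((i:ℕ)+1) (k+1) else 0)
            else (if k < a then Bfun b c n' m' (k+1) else 1))
          * (if k < a then (if (j : ℕ) < a then Cfun b c (k+1) ((j:ℕ)+1)
            else Dfun b c n m (k+1))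
          else (if (j : ℕ) < a then 0 else X))) := by
      rw [← Fin.sum_univ_eq_sum_range]
      rfl
    rw [expand, Finset.sum_range_succ]
    have last_simp : ¬ (a < a) := lt_irrefl a
    rw [Matrix.of_apply]
    by_cases hi : (i : ℕ) < a
    · by_cases hj : (j : ℕ) < a
      · simp only [hi, hj, if_true, last_simp, if_false, mul_zero, zero_mul, add_zero, one_mul]
        have conv1 : ∀ k ∈ range a, (if k < a then Afun b c ((i:ℕ)+1) (k+1) else 0)
            * (if k < a then Cfun b c (k+1) ((j:ℕ)+1) else 0)
            = Afun b c ((i:ℕ)+1) (k+1) * Cfun b c (k+1) ((j:ℕ)+1) := by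
          intro k hk
          simp only [mem_range] at hk
          rw [if_pos hk, if_pos hk]
        rw [Finset.sum_congr rfl conv1,
          range_to_Icc a (fun t => Afun b c ((i:ℕ)+1) t * Cfun b c t ((j:ℕ)+1)),
          AC b c hb hc a ((i:ℕ)+1) ((j:ℕ)+1) (by omega) (by omega) (by omega) (by omega)]
        congr 1
      · simp only [hi, hj, if_true, last_simp, if_false, mul_zero, zero_mul, add_zero, one_mul]
        have conv1 : ∀ k ∈ range a, (if k < a then Afun b c ((i:ℕ)+1) (k+1) else 0)
            * (if k < a then Dfun b c n m (k+1) else X)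
            = Afun b c ((i:ℕ)+1) (k+1) * Dfun b c n m (k+1) := by
          intro k hk
          simp only [mem_range] at hk
          rw [if_pos hk, if_pos hk]
        rw [Finset.sum_congr rfl conv1,
          range_to_Icc a (fun t => Afun b c ((i:ℕ)+1) t * Dfun b c n m t),
          AD_apply b c hc n m a ((i:ℕ)+1) (by omega) (by omega)]
        congr 1
    · by_cases hj : (j : ℕ) < a
      · simp only [hi, hj, if_true, last_simp, if_false, mul_zero, zero_mul, add_zero, one_mul]
        have conv1 : ∀ k ∈ range a, (if k < a then Bfun b c n' m' (k+1) else 1)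
            * (if k < a then Cfun b c (k+1) ((j:ℕ)+1) else 0)
            = Bfun b c n' m' (k+1) * Cfun b c (k+1) ((j:ℕ)+1) := by
          intro k hk
          simp only [mem_range] at hk
          rw [if_pos hk, if_pos hk]
        rw [Finset.sum_congr rfl conv1,
          range_to_Icc a (fun t => Bfun b c n' m' t * Cfun b c t ((j:ℕ)+1)),
          BC_apply b c hb n' m' a ((j:ℕ)+1) (by omega) (by omega)]
        congr 1
      · simp only [hi, hj, if_true, last_simp, if_false, mul_zero, zero_mul, add_zero, one_mul]
        have conv1 : ∀ k ∈ range a, (if k < a then Bfun b c n' m' (k+1) else 1)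
            * (if k < a then Dfun b c n m (k+1) else X)
            = Bfun b c n' m' (k+1) * Dfun b c n m (k+1) := by
          intro k hk
          simp only [mem_range] at hk
          rw [if_pos hk, if_pos hk]
        rw [Finset.sum_congr rfl conv1,
          range_to_Icc a (fun t => Bfun b c n' m' t * Dfun b c n m t), hX]
        ring
  have hdetL : L.det = 1 := by
    have tri : L.BlockTriangular OrderDual.toDual := by
      intro i j hij
      have hij' : (i : ℕ) < (j : ℕ) := hij
      rw [hL, Matrix.of_apply]
      by_cases hi : (i : ℕ) < a
      · by_cases hj : (j : ℕ) < a
        · rw [if_pos hi, if_pos hj, Afun, if_neg (by omega)]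
        · rw [if_pos hi, if_neg hj]
      · omega
    rw [Matrix.det_of_lowerTriangular L tri]
    apply Finset.prod_eq_one
    intro i _
    rw [hL, Matrix.of_apply]
    by_cases hi : (i : ℕ) < a
    · rw [if_pos hi, if_pos hi, Afun_diag]
    · rw [if_neg hi, if_neg hi]
  have hdetU : U.det = (∏ t ∈ Icc 1 a, Cfun b c t t) * X := by
    have tri : U.BlockTriangular id := by
      intro i j hij
      have hij' : (j : ℕ) < (i : ℕ) := hij
      rw [hU, Matrix.of_apply]
      by_cases hi : (i : ℕ) < a
      · rw [if_pos hi, if_pos (by omega), Cfun, if_neg (by omega)]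
      · rw [if_neg hi, if_pos (by omega)]
    rw [Matrix.det_of_upperTriangular tri]
    have expand : ∏ i : Fin (a+1), U i i
        = ∏ k ∈ range (a+1), (if k < a then (if k < a then Cfun b c (k+1) (k+1)
            else Dfun b c n m (k+1)) else (if k < a then 0 else X)) := by
      rw [← Fin.prod_univ_eq_prod_range]
      rfl
    rw [expand, Finset.prod_range_succ, if_neg (lt_irrefl a), if_neg (lt_irrefl a)]
    congr 1
    have conv1 : ∀ k ∈ range a, (if k < a then (if k < a then Cfun b c (k+1) (k+1)
        else Dfun b c n m (k+1)) else (if k < a then 0 else X)) = Cfun b c (k+1) (k+1) := by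
      intro k hk
      simp only [mem_range] at hk
      rw [if_pos hk, if_pos hk]
    rw [Finset.prod_congr rfl conv1]
    rw [← Finset.Ico_add_one_right_eq_Icc, Finset.prod_Ico_eq_prod_range, show a+1-1 = a from rfl]
    exact Finset.prod_congr rfl (fun k _ => by rw [Nat.add_comm])
  rw [hPLU, Matrix.det_mul, hdetL, hdetU, one_mul, macmahon_eq a b c hb hc, hX]
  congr 1
  congr 1
  apply Finset.sum_congr rfl
  intro t ht
  simp only [mem_Icc] at ht
  rw [G_eq_D b c hc n m t ht.1, H_eq_B b c hb n' m' t ht.1]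
  have hα : (((b+c+t-1).choose (b+t-1) : ℕ) : ℚ) ≠ 0 := by
    exact_mod_cast (Nat.choose_pos (by omega : b+t-1 ≤ b+c+t-1)).ne'
  have hβ : (((b+t-1).choose (t-1) : ℕ) : ℚ) ≠ 0 := by
    exact_mod_cast (Nat.choose_pos (by omega : t-1 ≤ b+t-1)).ne'
  field_simp
end
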